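/- Let v₁, v₂, v₃ be quaternions with |v₁| = |v₂| = |v₃| = 1, and set Δ₁ = v₁·v₃⁻¹·v₂ and Δ₂ = v₂·v₃⁻¹·v₁. Then the orthogonal projections of Δ₁ and Δ₂ onto each of v₁, v₂, v₃ coincide: ⟨Δ₁, vᵢ⟩ = ⟨Δ₂, vᵢ⟩ for i = 1, 2, 3, where ⟨·,·⟩ is the real inner product on ℍ ≅ ℝ⁴. Equivalently, Δ₁ − Δ₂ is orthogonal to the real span of v₁, v₂, v₃. -/

import Mathlib

open RealInnerProductSpace

theorem delta_projections_coincide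
    (v₁ v₂ v₃ : Quaternion ℝ) (h₁ : ‖v₁‖ = 1) (h₂ : ‖v₂‖ = 1) (h₃ : ‖v₃‖ = 1) :
    (⟪v₁ * v₃⁻¹ * v₂, v₁⟫ = ⟪v₂ * v₃⁻¹ * v₁, v₁⟫ ∧
     ⟪v₁ * v₃⁻¹ * v₂, v₂⟫ = ⟪v₂ * v₃⁻¹ * v₁, v₂⟫ ∧
     ⟪v₁ * v₃⁻¹ * v₂, v₃⟫ = ⟪v₂ * v₃⁻¹ * v₁, v₃⟫) ∧
    ∀ w ∈ Submodule.span ℝ ({v₁, v₂, v₃} : Set (Quaternion ℝ)),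
      ⟪v₁ * v₃⁻¹ * v₂ - v₂ * v₃⁻¹ * v₁, w⟫ = 0 := by
  have hn3 : Quaternion.normSq v₃ = 1 := by
    have := Quaternion.normSq_eq_norm_mul_self v₃
    rw [h₃] at this; simpa using this
  have hinv : v₃⁻¹ = star v₃ := by
    rw [Quaternion.inv_def, hn3]
    simp
  have e1 : ⟪v₁ * v₃⁻¹ * v₂, v₁⟫ = ⟪v₂ * v₃⁻¹ * v₁, v₁⟫ := by
    simp only [Quaternion.inner_def, hinv, Quaternion.re_mul, Quaternion.re_star,
      Quaternion.imI_star, Quaternion.imJ_star, Quaternion.imK_star,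
      Quaternion.imI_mul, Quaternion.imJ_mul, Quaternion.imK_mul]
    ring
  have e2 : ⟪v₁ * v₃⁻¹ * v₂, v₂⟫ = ⟪v₂ * v₃⁻¹ * v₁, v₂⟫ := by
    simp only [Quaternion.inner_def, hinv, Quaternion.re_mul, Quaternion.re_star,
      Quaternion.imI_star, Quaternion.imJ_star, Quaternion.imK_star,
      Quaternion.imI_mul, Quaternion.imJ_mul, Quaternion.imK_mul]
    ring
  have e3 : ⟪v₁ * v₃⁻¹ * v₂, v₃⟫ = ⟪v₂ * v₃⁻¹ * v₁, v₃⟫ := by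
    simp only [Quaternion.inner_def, hinv, Quaternion.re_mul, Quaternion.re_star,
      Quaternion.imI_star, Quaternion.imJ_star, Quaternion.imK_star,
      Quaternion.imI_mul, Quaternion.imJ_mul, Quaternion.imK_mul]
    ring
  refine ⟨⟨e1, e2, e3⟩, ?_⟩
  intro w hw
  induction hw using Submodule.span_induction with
  | mem x hx =>
    rcases hx with rfl | rfl | rfl
    · rw [inner_sub_left, e1, sub_self]
    · rw [inner_sub_left, e2, sub_self]
    · rw [inner_sub_left, e3, sub_self]
  | zero => simp
  | add x y _ _ hx hy => rw [inner_add_right, hx, hy, add_zero]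
  | smul r x _ hx => rw [real_inner_smul_right, hx, mul_zero]
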